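/- Let m < k be positive integers and x_1, …, x_k ∈ ℝ^m. Suppose the polytope P = {λ ∈ ℝ^k : ∑_{i=1}^k λ_i x_i = 0, ∑_{i=1}^k λ_i = k − 1 − m, and 0 ≤ λ_i ≤ 1 for all i} is nonempty. Then P contains a point λ with λ_i = 0 for at least one index i. -/

import Mathlib

open Finset

lemma steinitz_kernel_vec (m k : ℕ) (x : Fin k → Fin m → ℝ) (S : Finset (Fin k))
    (hS : m + 2 ≤ S.card) :
    ∃ v : Fin k → ℝ, v ≠ 0 ∧ (∀ i ∉ S, v i = 0) ∧
      (∑ i, v i • x i) = 0 ∧ (∑ i, v i) = 0 := by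
  classical
  let L : (↥S → ℝ) →ₗ[ℝ] ((Fin m → ℝ) × ℝ) :=
    { toFun := fun w => (∑ i : S, w i • x i, ∑ i : S, w i)
      map_add' := by
        intro a b
        simp [add_smul, Finset.sum_add_distrib, Prod.ext_iff]
      map_smul' := by
        intro c a
        simp [mul_smul, ← Finset.smul_sum, Prod.ext_iff, Finset.mul_sum] }
  have hnotinj : ¬ Function.Injective L := by
    intro hinj
    have h1 := LinearMap.finrank_le_finrank_of_injective hinj
    have h2 : Module.finrank ℝ (↥S → ℝ) = S.card := by
      simp [Module.finrank_pi, Fintype.card_coe]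
    have h3 : Module.finrank ℝ ((Fin m → ℝ) × ℝ) = m + 1 := by
      simp [Module.finrank_prod, Module.finrank_pi]
    omega
  rw [← LinearMap.ker_eq_bot] at hnotinj
  obtain ⟨w, hwL, hw0⟩ := Submodule.ne_bot_iff _ |>.mp hnotinj
  have hwL' : L w = 0 := hwL
  refine ⟨fun i => if h : i ∈ S then w ⟨i, h⟩ else 0, ?_, ?_, ?_, ?_⟩
  · intro hv
    apply hw0
    funext j
    have := congrFun hv j
    simpa [j.2] using this
  · intro i hi; simp [hi]
  · have := congrArg Prod.fst hwL'
    simp only [L, LinearMap.coe_mk, AddHom.coe_mk] at this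
    rw [← Finset.sum_subset (Finset.subset_univ S) (by intro i _ hi; simp [hi])] at *
    rw [← Finset.sum_attach S (fun i => (if h : i ∈ S then w ⟨i, h⟩ else 0) • x i)]
    simpa using this
  · have := congrArg Prod.snd hwL'
    simp only [L, LinearMap.coe_mk, AddHom.coe_mk] at this
    rw [← Finset.sum_subset (Finset.subset_univ S) (by intro i _ hi; simp [hi])]
    rw [← Finset.sum_attach S (fun i => (if h : i ∈ S then w ⟨i, h⟩ else 0))]
    simpa using this

lemma steinitz_counting (m k : ℕ) (hm : 0 < m) (lam : Fin k → ℝ)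
    (hsum : (∑ i, lam i) = (k : ℝ) - 1 - (m : ℝ))
    (hbd : ∀ i, 0 ≤ lam i ∧ lam i ≤ 1)
    (hF : (Finset.univ.filter (fun i => lam i ≠ 0 ∧ lam i ≠ 1)).card ≤ m + 1) :
    ∃ i : Fin k, lam i = 0 := by
  classical
  by_contra hc
  push_neg at hc
  set F := Finset.univ.filter (fun i => lam i ≠ 0 ∧ lam i ≠ 1) with hFdef
  have hone : ∀ i ∈ Fᶜ, lam i = 1 := by
    intro i hi
    simp only [hFdef, Finset.mem_compl, Finset.mem_filter, Finset.mem_univ, true_and,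
      not_and_or, not_not] at hi
    rcases hi with h | h
    · exact absurd h (hc i)
    · exact h
  have hsplit : (∑ i, lam i) = (∑ i ∈ F, lam i) + (Fᶜ.card : ℝ) := by
    rw [← Finset.sum_add_sum_compl F lam]
    congr 1
    rw [Finset.sum_congr rfl hone]
    simp
  have hcardc : Fᶜ.card = k - F.card := by
    simp [Finset.card_compl]
  have hFk : F.card ≤ k := by
    simpa using Finset.card_le_card (Finset.subset_univ F)
  have hcardR : (Fᶜ.card : ℝ) = (k : ℝ) - F.card := by
    rw [hcardc]; push_cast [hFk]; ring
  have hs : (F.card : ℝ) = (m : ℝ) + 1 + (∑ i ∈ F, lam i) := by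
    rw [hsum, hcardR] at hsplit
    linarith
  have hpos : ∀ i ∈ F, 0 < lam i := by
    intro i hi
    simp only [hFdef, Finset.mem_filter] at hi
    exact lt_of_le_of_ne (hbd i).1 (Ne.symm hi.2.1)
  have hsge : 0 ≤ ∑ i ∈ F, lam i := Finset.sum_nonneg (fun i hi => (hpos i hi).le)
  have hcardle : (F.card : ℝ) ≤ (m : ℝ) + 1 := by exact_mod_cast hF
  have hszero : (∑ i ∈ F, lam i) = 0 := by linarith
  have hFcard : F.card = m + 1 := by
    have : (F.card : ℝ) = (m : ℝ) + 1 := by linarith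
    exact_mod_cast this
  have hFne : F.Nonempty := Finset.card_pos.mp (by omega)
  have : 0 < ∑ i ∈ F, lam i := Finset.sum_pos hpos hFne
  linarith

lemma steinitz_main (m k : ℕ) (hm : 0 < m) (x : Fin k → Fin m → ℝ) :
    ∀ (n : ℕ) (lam : Fin k → ℝ),
      (∑ i, lam i • x i) = 0 → (∑ i, lam i) = (k : ℝ) - 1 - (m : ℝ) →
      (∀ i, 0 ≤ lam i ∧ lam i ≤ 1) →
      (Finset.univ.filter (fun i => lam i ≠ 0 ∧ lam i ≠ 1)).card ≤ n →
      ∃ lam' : Fin k → ℝ,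
        ((∑ i, lam' i • x i) = 0 ∧ (∑ i, lam' i) = (k : ℝ) - 1 - (m : ℝ) ∧
          ∀ i, 0 ≤ lam' i ∧ lam' i ≤ 1) ∧ ∃ i, lam' i = 0 := by
  classical
  intro n
  induction n with
  | zero =>
    intro lam hx hsum hbd hcard
    exact ⟨lam, ⟨hx, hsum, hbd⟩, steinitz_counting m k hm lam hsum hbd (by omega)⟩
  | succ n ih =>
    intro lam hx hsum hbd hcard
    set F := Finset.univ.filter (fun i => lam i ≠ 0 ∧ lam i ≠ 1) with hFdef
    by_cases hsmall : F.card ≤ m + 1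
    · exact ⟨lam, ⟨hx, hsum, hbd⟩, steinitz_counting m k hm lam hsum hbd hsmall⟩
    · -- descent
      obtain ⟨v, hv0, hvsupp, hvx, hvsum⟩ :=
        steinitz_kernel_vec m k x F (by omega)
      -- indices where v ≠ 0
      set T := Finset.univ.filter (fun i => v i ≠ 0) with hTdef
      have hTne : T.Nonempty := by
        rcases Function.ne_iff.mp hv0 with ⟨j, hj⟩
        have : v j ≠ 0 := by simpa using hj
        exact ⟨j, by simp [hTdef, this]⟩
      have hTF : ∀ i ∈ T, i ∈ F := by
        intro i hi
        by_contra h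
        exact (by simpa [hTdef] using hi : v i ≠ 0) (hvsupp i h)
      have hfrac : ∀ i ∈ T, 0 < lam i ∧ lam i < 1 := by
        intro i hi
        have hiF := hTF i hi
        simp only [hFdef, Finset.mem_filter] at hiF
        exact ⟨lt_of_le_of_ne (hbd i).1 (Ne.symm hiF.2.1),
          lt_of_le_of_ne (hbd i).2 hiF.2.2⟩
      set b : Fin k → ℝ := fun i => if 0 < v i then (1 - lam i) / v i else lam i / (-v i)
        with hbdef
      have hbpos : ∀ i ∈ T, 0 < b i := by
        intro i hi
        have hvne : v i ≠ 0 := by simpa [hTdef] using hi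
        obtain ⟨h1, h2⟩ := hfrac i hi
        by_cases hp : 0 < v i
        · simp only [hbdef, if_pos hp]
          exact div_pos (by linarith) hp
        · have hneg : v i < 0 := lt_of_le_of_ne (not_lt.mp hp) hvne
          simp only [hbdef, if_neg hp]
          exact div_pos h1 (by linarith)
      obtain ⟨i₀, hi₀T, hi₀min⟩ := Finset.exists_min_image T b hTne
      set t := b i₀ with htdef
      have ht : 0 < t := hbpos i₀ hi₀T
      set lam' : Fin k → ℝ := fun i => lam i + t * v i with hlam'
      -- bounds
      have hbd' : ∀ i, 0 ≤ lam' i ∧ lam' i ≤ 1 := by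
        intro i
        by_cases hvz : v i = 0
        · simpa [hlam', hvz] using hbd i
        · have hiT : i ∈ T := by simp [hTdef, hvz]
          have hti : t ≤ b i := hi₀min i hiT
          obtain ⟨h1, h2⟩ := hfrac i hiT
          rcases lt_or_gt_of_ne hvz with hneg | hpos
          · have hbi : b i = lam i / (-v i) := by simp [hbdef, not_lt.mpr hneg.le]
            have : t * (-v i) ≤ lam i := by
              rw [hbi] at hti
              calc t * (-v i) ≤ (lam i / (-v i)) * (-v i) := by
                    exact mul_le_mul_of_nonneg_right hti (by linarith)
                _ = lam i := by field_simp
            constructor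
            · simp only [hlam']; nlinarith
            · simp only [hlam']; nlinarith
          · have hbi : b i = (1 - lam i) / v i := by simp [hbdef, hpos]
            have : t * v i ≤ 1 - lam i := by
              rw [hbi] at hti
              calc t * v i ≤ ((1 - lam i) / v i) * v i :=
                    mul_le_mul_of_nonneg_right hti hpos.le
                _ = 1 - lam i := by field_simp
            constructor
            · simp only [hlam']; nlinarith
            · simp only [hlam']; nlinarith
      -- linear constraints
      have hx' : (∑ i, lam' i • x i) = 0 := by
        simp only [hlam', add_smul, Finset.sum_add_distrib, hx, mul_smul, ← Finset.smul_sum,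
          hvx, smul_zero, add_zero]
      have hsum' : (∑ i, lam' i) = (k : ℝ) - 1 - (m : ℝ) := by
        simp only [hlam', Finset.sum_add_distrib, hsum, ← Finset.mul_sum, hvsum, mul_zero,
          add_zero]
      -- i₀ becomes 0 or 1
      have hi₀ : lam' i₀ = 0 ∨ lam' i₀ = 1 := by
        have hvne : v i₀ ≠ 0 := by simpa [hTdef] using hi₀T
        by_cases hp : 0 < v i₀
        · right
          simp only [hlam', htdef, hbdef, if_pos hp]
          field_simp
          ring
        · left
          have hneg : v i₀ < 0 := lt_of_le_of_ne (not_lt.mp hp) hvne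
          simp only [hlam', htdef, hbdef, if_neg hp]
          field_simp [hvne]
          ring
      -- new fractional set strictly smaller
      set F' := Finset.univ.filter (fun i => lam' i ≠ 0 ∧ lam' i ≠ 1) with hF'def
      have hsub : F' ⊆ F := by
        intro i hi
        simp only [hF'def, Finset.mem_filter, Finset.mem_univ, true_and] at hi
        by_contra h
        have hvz : v i = 0 := hvsupp i h
        have : lam' i = lam i := by simp [hlam', hvz]
        simp only [hFdef, Finset.mem_filter, Finset.mem_univ, true_and, not_and_or,
          not_not] at h
        rcases h with h | h <;> rw [this, h] at hi <;> simp at hi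
      have hi₀F : i₀ ∈ F := hTF i₀ hi₀T
      have hi₀F' : i₀ ∉ F' := by
        simp only [hF'def, Finset.mem_filter, Finset.mem_univ, true_and, not_and_or, not_not]
        rcases hi₀ with h | h
        · left; exact h
        · right; exact h
      have hcard' : F'.card < F.card :=
        Finset.card_lt_card (Finset.ssubset_iff_of_subset hsub |>.mpr ⟨i₀, hi₀F, hi₀F'⟩)
      have hle : (Finset.univ.filter (fun i => lam' i ≠ 0 ∧ lam' i ≠ 1)).card ≤ n := by
        have := hcard'
        simp only [← hF'def, ← hFdef] at *
        omega
      exact ih lam' hx' hsum' hbd' hle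


/-- The pruning step of the LP-based proof of the Steinitz lemma: if the polytope
`P = {λ ∈ ℝ^k : ∑ λ_i x_i = 0, ∑ λ_i = k − 1 − m, 0 ≤ λ ≤ 1}` is nonempty,
then it contains a point with some coordinate equal to `0`. -/
theorem steinitz_pruning_step
    (m k : ℕ) (hm : 0 < m) (hmk : m < k)
    (x : Fin k → Fin m → ℝ)
    (P : Set (Fin k → ℝ))
    (hP : P = {lam : Fin k → ℝ |
      (∑ i, lam i • x i) = 0 ∧
      (∑ i, lam i) = (k : ℝ) - 1 - (m : ℝ) ∧
      ∀ i, 0 ≤ lam i ∧ lam i ≤ 1})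
    (hne : P.Nonempty) :
    ∃ lam ∈ P, ∃ i : Fin k, lam i = 0 := by
  classical
  obtain ⟨lam0, h0⟩ := hne
  rw [hP] at h0
  obtain ⟨hx0, hs0, hb0⟩ := h0
  obtain ⟨lam', ⟨h1, h2, h3⟩, i, hi⟩ :=
    steinitz_main m k hm x
      (Finset.univ.filter (fun i => lam0 i ≠ 0 ∧ lam0 i ≠ 1)).card
      lam0 hx0 hs0 hb0 le_rfl
  exact ⟨lam', by rw [hP]; exact ⟨h1, h2, h3⟩, i, hi⟩
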